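/- In the non-zero-sum malware detection game Γ, the set of Defender Nash-equilibrium strategies equals the set of Defender maximin strategies: a Defender mixed strategy ρ* satisfies (∃ μ*, (ρ*,μ*) is a mixed Nash equilibrium of Γ) if and only if ρ* is a maximin strategy of the Defender, i.e. inf over all Attacker mixed strategies μ of U_d(ρ*,μ) is ≥ inf over all μ of U_d(ρ,μ), for every Defender mixed strategy ρ. -/

import Mathlib

open Finset Set

/-- Expected security damage bilinear form `S(ρ,μ) = Σ_{j,l} ρ j · μ l · S j l`. -/
def Sbil {R M : ℕ} (S : Fin R → Fin M → ℝ) (ρ : Fin R → ℝ) (μ : Fin M → ℝ) : ℝ :=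
  ∑ j, ∑ l, ρ j * μ l * S j l

/-- Expected inspection cost `k(ρ) = Σ_j ρ j · C j`. -/
def kcost {R : ℕ} (C : Fin R → ℝ) (ρ : Fin R → ℝ) : ℝ :=
  ∑ j, ρ j * C j

/-- Defender expected utility `U_d(ρ,μ) = -S(ρ,μ) - k(ρ)` (same in `Γ₀` and `Γ`). -/
def Ud {R M : ℕ} (S : Fin R → Fin M → ℝ) (C : Fin R → ℝ) (ρ : Fin R → ℝ)
    (μ : Fin M → ℝ) : ℝ :=
  -Sbil S ρ μ - kcost C ρ

/-- Mixed Nash equilibrium of the zero-sum game `Γ₀`, where the Attacker's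
utility is `U_a^{Γ₀}(ρ,μ) = -U_d(ρ,μ)`. -/
def NEzero {R M : ℕ} (S : Fin R → Fin M → ℝ) (C : Fin R → ℝ) (ρs : Fin R → ℝ)
    (μs : Fin M → ℝ) : Prop :=
  ρs ∈ stdSimplex ℝ (Fin R) ∧ μs ∈ stdSimplex ℝ (Fin M) ∧
  (∀ ρ ∈ stdSimplex ℝ (Fin R), Ud S C ρs μs ≥ Ud S C ρ μs) ∧
  (∀ μ ∈ stdSimplex ℝ (Fin M), -Ud S C ρs μs ≥ -Ud S C ρs μ)

/-- Mixed Nash equilibrium of the non-zero-sum game `Γ`, where the Attacker's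
utility is `U_a^{Γ}(ρ,μ) = Ξ·S(ρ,μ)`. -/
def NEgame {R M : ℕ} (S : Fin R → Fin M → ℝ) (C : Fin R → ℝ) (Ξ : ℝ)
    (ρs : Fin R → ℝ) (μs : Fin M → ℝ) : Prop :=
  ρs ∈ stdSimplex ℝ (Fin R) ∧ μs ∈ stdSimplex ℝ (Fin M) ∧
  (∀ ρ ∈ stdSimplex ℝ (Fin R), Ud S C ρs μs ≥ Ud S C ρ μs) ∧
  (∀ μ ∈ stdSimplex ℝ (Fin M), Ξ * Sbil S ρs μs ≥ Ξ * Sbil S ρs μ)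

/-- Maximin strategy of the Defender. -/
def Maximin {R M : ℕ} (S : Fin R → Fin M → ℝ) (C : Fin R → ℝ)
    (ρd : Fin R → ℝ) : Prop :=
  ρd ∈ stdSimplex ℝ (Fin R) ∧
  ∀ ρ ∈ stdSimplex ℝ (Fin R),
    sInf ((Ud S C ρd) '' stdSimplex ℝ (Fin M)) ≥
      sInf ((Ud S C ρ) '' stdSimplex ℝ (Fin M))

/-- The Attacker's best-response set to `ρ` in the non-zero-sum game `Γ`. -/
def BRset {R M : ℕ} (S : Fin R → Fin M → ℝ) (Ξ : ℝ) (ρ : Fin R → ℝ) :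
    Set (Fin M → ℝ) :=
  {μ | μ ∈ stdSimplex ℝ (Fin M) ∧
    ∀ μ' ∈ stdSimplex ℝ (Fin M), Ξ * Sbil S ρ μ ≥ Ξ * Sbil S ρ μ'}

/-- Strong Stackelberg Equilibrium strategy of the Defender in `Γ`. -/
def SSEstrat {R M : ℕ} (S : Fin R → Fin M → ℝ) (C : Fin R → ℝ) (Ξ : ℝ)
    (ρs : Fin R → ℝ) : Prop :=
  ρs ∈ stdSimplex ℝ (Fin R) ∧
  ∀ ρ ∈ stdSimplex ℝ (Fin R),
    sSup ((Ud S C ρs) '' BRset S Ξ ρs) ≥ sSup ((Ud S C ρ) '' BRset S Ξ ρ)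


lemma single_mem_std {n : ℕ} (i : Fin n) : Pi.single i (1:ℝ) ∈ stdSimplex ℝ (Fin n) := by
  constructor
  · intro x
    rcases eq_or_ne x i with rfl | h
    · simp
    · simp [Pi.single_eq_of_ne h]
  · simp [Pi.single_apply]

lemma sum_mul_sub_const {n : ℕ} (w X : Fin n → ℝ) (c : ℝ) (hw : ∑ i, w i = 1) :
    ∑ i, w i * (X i - c) = (∑ i, w i * X i) - c := by
  have h : ∀ i ∈ Finset.univ, w i * (X i - c) = w i * X i - c * w i := fun i _ => by ring
  rw [Finset.sum_congr rfl h, Finset.sum_sub_distrib, ← Finset.mul_sum, hw, mul_one]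

/-- Theorem of the alternative for matrix games, via Hahn-Banach separation. -/
lemma alt_lemma {R M : ℕ} (hR : 0 < R) (hM : 0 < M) (A : Fin R → Fin M → ℝ) :
    (∃ μ ∈ stdSimplex ℝ (Fin M), ∀ j, ∑ l, μ l * A j l ≤ 0) ∨
    (∃ ρ ∈ stdSimplex ℝ (Fin R), ∀ l, 0 < ∑ j, ρ j * A j l) := by
  classical
  set T : (Fin M → ℝ) →ₗ[ℝ] (Fin R → ℝ) :=
    LinearMap.pi (fun j => ∑ l, A j l • LinearMap.proj l) with hT
  have hTapp : ∀ μ j, T μ j = ∑ l, μ l * A j l := by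
    intro μ j
    simp only [hT, LinearMap.pi_apply, LinearMap.coe_sum, Finset.sum_apply,
      LinearMap.smul_apply, LinearMap.proj_apply, smul_eq_mul]
    exact Finset.sum_congr rfl fun l _ => mul_comm _ _
  set Cs : Set (Fin R → ℝ) := T '' stdSimplex ℝ (Fin M) with hCs
  set Ds : Set (Fin R → ℝ) := Set.pi Set.univ (fun _ : Fin R => Set.Iic (0:ℝ)) with hDs
  by_cases hint : (Cs ∩ Ds).Nonempty
  · left
    obtain ⟨x, ⟨μ, hμ, rfl⟩, hxD⟩ := hint
    refine ⟨μ, hμ, fun j => ?_⟩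
    have := hxD j (Set.mem_univ j)
    rw [hTapp] at this
    exact this
  · right
    have hdisj : Disjoint Ds Cs := by
      rw [Set.disjoint_iff_inter_eq_empty, Set.inter_comm]
      exact Set.not_nonempty_iff_eq_empty.1 hint
    obtain ⟨f, u, v, hfD, huv, hfC⟩ :=
      geometric_hahn_banach_closed_compact
        (convex_pi fun i _ => convex_Iic (0:ℝ))
        (isClosed_set_pi fun i _ => isClosed_Iic)
        ((convex_stdSimplex ℝ (Fin M)).linear_image T)
        ((isCompact_stdSimplex ℝ (Fin M)).image T.continuous_on_pi) hdisj
    have hu : 0 < u := by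
      have h0 : (0 : Fin R → ℝ) ∈ Ds := fun i _ => by simp
      simpa using hfD 0 h0
    set p : Fin R → ℝ := fun j => f (Pi.single j 1) with hp
    have hfeq : ∀ x : Fin R → ℝ, f x = ∑ j, x j * p j := by
      intro x
      have hx : x = ∑ j, x j • (Pi.single j (1:ℝ) : Fin R → ℝ) := by
        ext i
        simp [Pi.single_apply]
      conv_lhs => rw [hx]
      rw [map_sum]
      simp [hp, smul_eq_mul]
    have hpnn : ∀ j, 0 ≤ p j := by
      intro j
      by_contra hneg
      push_neg at hneg
      have hx : ((u+1)/p j) • (Pi.single j (1:ℝ) : Fin R → ℝ) ∈ Ds := by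
        intro i _
        simp only [Pi.smul_apply, smul_eq_mul, Set.mem_Iic]
        rcases eq_or_ne i j with rfl | h
        · simp only [Pi.single_eq_same, mul_one]
          exact le_of_lt (div_neg_of_pos_of_neg (by linarith) hneg)
        · simp [Pi.single_eq_of_ne h]
      have h1 := hfD _ hx
      rw [map_smul, smul_eq_mul] at h1
      rw [show f (Pi.single j 1) = p j from rfl, div_mul_cancel₀ _ (ne_of_lt hneg)] at h1
      linarith
    have hcol : ∀ l, (fun j => A j l) ∈ Cs := by
      intro l
      refine ⟨Pi.single l 1, single_mem_std l, ?_⟩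
      ext j
      rw [hTapp]
      simp [Pi.single_apply, ite_mul]
    have hsum : 0 < ∑ j, p j := by
      rcases (Finset.sum_nonneg (fun j _ => hpnn j)).lt_or_eq with h | h
      · exact h
      · exfalso
        have hall : ∀ j, p j = 0 := fun j =>
          (Finset.sum_eq_zero_iff_of_nonneg (fun j _ => hpnn j)).1 h.symm j (Finset.mem_univ j)
        have hc := hfC _ (hcol ⟨0, hM⟩)
        rw [hfeq] at hc
        simp only [hall, mul_zero, Finset.sum_const_zero] at hc
        linarith
    refine ⟨fun j => p j / ∑ i, p i, ⟨fun j => div_nonneg (hpnn j) hsum.le, ?_⟩, ?_⟩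
    · rw [← Finset.sum_div, div_self hsum.ne']
    · intro l
      have hc := hfC _ (hcol l)
      rw [hfeq] at hc
      have heq : ∑ j, p j / (∑ i, p i) * A j l = (∑ j, A j l * p j) / ∑ i, p i := by
        rw [Finset.sum_div]
        exact Finset.sum_congr rfl fun j _ => by ring
      rw [heq]
      exact div_pos (lt_trans (lt_trans hu huv) hc) hsum

-- definitions from statement file assumed present above

lemma Ud_eq_g {R M : ℕ} (S : Fin R → Fin M → ℝ) (C : Fin R → ℝ)
    (ρ : Fin R → ℝ) (μ : Fin M → ℝ) (hμ : ∑ l, μ l = 1) :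
    Ud S C ρ μ = ∑ j, ∑ l, ρ j * μ l * (-(S j l) - C j) := by
  unfold Ud Sbil kcost
  have h1 : ∀ j ∈ Finset.univ, ∑ l, ρ j * μ l * (-(S j l) - C j)
      = (∑ l, -(ρ j * μ l * S j l)) - ρ j * C j := by
    intro j _
    have h2 : ∀ l ∈ Finset.univ, ρ j * μ l * (-(S j l) - C j)
        = -(ρ j * μ l * S j l) - (ρ j * C j) * μ l := fun l _ => by ring
    rw [Finset.sum_congr rfl h2, Finset.sum_sub_distrib, ← Finset.mul_sum, hμ, mul_one]
  rw [Finset.sum_congr rfl h1, Finset.sum_sub_distrib]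
  simp

/-- in `Γ`, the Defender's Nash-equilibrium strategies are exactly
her maximin strategies. -/
theorem stmt2 {R M : ℕ} (hR : 0 < R) (hM : 0 < M)
    (S : Fin R → Fin M → ℝ) (hS : ∀ j l, 0 ≤ S j l)
    (C : Fin R → ℝ) (hC : ∀ j, 0 ≤ C j)
    (Ξ : ℝ) (hΞ : 0 < Ξ)
    (ρs : Fin R → ℝ) :
    (∃ μs, NEgame S C Ξ ρs μs) ↔ Maximin S C ρs := by
  classical
  have hμ0 : (Pi.single ⟨0, hM⟩ (1:ℝ) : Fin M → ℝ) ∈ stdSimplex ℝ (Fin M) :=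
    single_mem_std _
  -- lower bound for Ud on simplices
  set L : ℝ := -((∑ j, ∑ l, S j l) + ∑ j, C j) with hL
  have hbdd : ∀ ρ ∈ stdSimplex ℝ (Fin R), ∀ μ ∈ stdSimplex ℝ (Fin M), L ≤ Ud S C ρ μ := by
    intro ρ hρ μ hμ
    have hρle : ∀ j, ρ j ≤ 1 := fun j =>
      hρ.2 ▸ Finset.single_le_sum (fun i _ => hρ.1 i) (Finset.mem_univ j)
    have hμle : ∀ l, μ l ≤ 1 := fun l =>
      hμ.2 ▸ Finset.single_le_sum (fun i _ => hμ.1 i) (Finset.mem_univ l)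
    have h1 : Sbil S ρ μ ≤ ∑ j, ∑ l, S j l := by
      apply Finset.sum_le_sum
      intro j _
      apply Finset.sum_le_sum
      intro l _
      have : ρ j * μ l ≤ 1 := mul_le_one₀ (hρle j) (hμ.1 l) (hμle l)
      nlinarith [hS j l, mul_nonneg (hρ.1 j) (hμ.1 l)]
    have h2 : kcost C ρ ≤ ∑ j, C j := by
      apply Finset.sum_le_sum
      intro j _
      nlinarith [hC j, hρle j, hρ.1 j]
    unfold Ud
    rw [hL]; linarith
  have hBB : ∀ ρ ∈ stdSimplex ℝ (Fin R), BddBelow (Ud S C ρ '' stdSimplex ℝ (Fin M)) := by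
    intro ρ hρ
    exact ⟨L, by rintro b ⟨μ, hμ, rfl⟩; exact hbdd ρ hρ μ hμ⟩
  have hNE : ∀ ρ : Fin R → ℝ, (Ud S C ρ '' stdSimplex ℝ (Fin M)).Nonempty :=
    fun ρ => ⟨_, _, hμ0, rfl⟩
  constructor
  · rintro ⟨μs, hρsΔ, hμsΔ, hbest, hatt⟩
    refine ⟨hρsΔ, fun ρ hρ => ?_⟩
    have hmin : ∀ μ ∈ stdSimplex ℝ (Fin M), Ud S C ρs μs ≤ Ud S C ρs μ := by
      intro μ hμ
      have h := hatt μ hμ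
      have hs' : Sbil S ρs μ ≤ Sbil S ρs μs := le_of_mul_le_mul_left h hΞ
      unfold Ud; linarith
    have h1 : sInf (Ud S C ρs '' stdSimplex ℝ (Fin M)) = Ud S C ρs μs := by
      apply le_antisymm
      · exact csInf_le (hBB ρs hρsΔ) ⟨μs, hμsΔ, rfl⟩
      · apply le_csInf (hNE ρs)
        rintro b ⟨μ, hμ, rfl⟩
        exact hmin μ hμ
    rw [ge_iff_le, h1] at *
    calc sInf (Ud S C ρ '' stdSimplex ℝ (Fin M)) ≤ Ud S C ρ μs :=
          csInf_le (hBB ρ hρ) ⟨μs, hμsΔ, rfl⟩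
      _ ≤ Ud S C ρs μs := hbest ρ hρ
  · rintro ⟨hρsΔ, hmax⟩
    set v := sInf (Ud S C ρs '' stdSimplex ℝ (Fin M)) with hv
    rcases alt_lemma hR hM (fun j l => -(S j l) - C j - v) with
      ⟨μs, hμsΔ, hle⟩ | ⟨ρ, hρΔ, hgt⟩
    · have hμsum := hμsΔ.2
      have hBμ : ∀ j, ∑ l, μs l * (-(S j l) - C j) ≤ v := by
        intro j
        have h := hle j
        rw [sum_mul_sub_const μs (fun l => -(S j l) - C j) v hμsum] at h
        linarith
      have hUge : ∀ μ ∈ stdSimplex ℝ (Fin M), v ≤ Ud S C ρs μ :=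
        fun μ hμ => csInf_le (hBB ρs hρsΔ) ⟨μ, hμ, rfl⟩
      have hUle : ∀ ρ ∈ stdSimplex ℝ (Fin R), Ud S C ρ μs ≤ v := by
        intro ρ hρ
        rw [Ud_eq_g S C ρ μs hμsum]
        have hstep : ∀ j ∈ Finset.univ, ∑ l, ρ j * μs l * (-(S j l) - C j)
            ≤ ρ j * v := by
          intro j _
          have : ∑ l, ρ j * μs l * (-(S j l) - C j)
              = ρ j * ∑ l, μs l * (-(S j l) - C j) := by
            rw [Finset.mul_sum]
            exact Finset.sum_congr rfl fun l _ => by ring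
          rw [this]
          exact mul_le_mul_of_nonneg_left (hBμ j) (hρ.1 j)
        calc ∑ j, ∑ l, ρ j * μs l * (-(S j l) - C j) ≤ ∑ j, ρ j * v :=
              Finset.sum_le_sum hstep
          _ = v := by rw [← Finset.sum_mul, hρ.2, one_mul]
      have h1 : v ≤ Ud S C ρs μs := hUge μs hμsΔ
      have h2 : Ud S C ρs μs ≤ v := hUle ρs hρsΔ
      refine ⟨μs, hρsΔ, hμsΔ, fun ρ hρ => le_trans (hUle ρ hρ) h1, fun μ hμ => ?_⟩
      have h3 : Ud S C ρs μs ≤ Ud S C ρs μ := le_trans h2 (hUge μ hμ)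
      have h4 : Sbil S ρs μ ≤ Sbil S ρs μs := by
        unfold Ud at h3; linarith
      exact mul_le_mul_of_nonneg_left h4 hΞ.le
    · exfalso
      have hρsum := hρΔ.2
      have hBl : ∀ l, v < ∑ j, ρ j * (-(S j l) - C j) := by
        intro l
        have h := hgt l
        rw [sum_mul_sub_const ρ (fun j => -(S j l) - C j) v hρsum] at h
        linarith
      haveI : Nonempty (Fin M) := ⟨⟨0, hM⟩⟩
      set v' := Finset.univ.inf' Finset.univ_nonempty
        (fun l => ∑ j, ρ j * (-(S j l) - C j)) with hv'
      have hvv' : v < v' := (Finset.lt_inf'_iff _).2 fun l _ => hBl l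
      have hge : ∀ μ ∈ stdSimplex ℝ (Fin M), v' ≤ Ud S C ρ μ := by
        intro μ hμ
        rw [Ud_eq_g S C ρ μ hμ.2, Finset.sum_comm]
        have hstep : ∀ l ∈ Finset.univ, μ l * v' ≤ ∑ j, ρ j * μ l * (-(S j l) - C j) := by
          intro l _
          have heq : ∑ j, ρ j * μ l * (-(S j l) - C j)
              = μ l * ∑ j, ρ j * (-(S j l) - C j) := by
            rw [Finset.mul_sum]
            exact Finset.sum_congr rfl fun j _ => by ring
          rw [heq]
          exact mul_le_mul_of_nonneg_left (Finset.inf'_le _ (Finset.mem_univ l)) (hμ.1 l)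
        calc v' = ∑ l, μ l * v' := by rw [← Finset.sum_mul, hμ.2, one_mul]
          _ ≤ ∑ l, ∑ j, ρ j * μ l * (-(S j l) - C j) := Finset.sum_le_sum hstep
      have h5 : v' ≤ sInf (Ud S C ρ '' stdSimplex ℝ (Fin M)) := by
        apply le_csInf (hNE ρ)
        rintro b ⟨μ, hμ, rfl⟩
        exact hge μ hμ
      have h6 := hmax ρ hρΔ
      rw [ge_iff_le] at h6
      linarith
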